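/- There exists a universal constant c > 0 with the following property. Let X ⊆ ℝⁿ and Y ⊆ ℝᵐ be nonempty convex compact sets, κ = max{max_{x∈X}‖x‖₂, max_{y∈Y}‖y‖₂} > 0, C_X = cone({κ}×X) ⊆ ℝ^{n+1}, C_Y = cone({κ}×Y) ⊆ ℝ^{m+1}, and let F : X×Y → ℝ be convex in its first argument and concave in its second. Let p ∈ ℕ, ω_t = t^p, T ≥ 1, and let x_t ∈ X, y_t ∈ Y, f_t ∈ ℝⁿ, g_t ∈ ℝᵐ (t = 1,…,T) satisfy: f_t is a subgradient of F(·, y_t) at x_t with ‖f_t‖₂ ≤ L, g_t is a supergradient of F(x_t, ·) at y_t with ‖g_t‖₂ ≤ L; with u_0^x = 0 and u_t^x = ∑_{τ=1}^t ω_τ (⟨f_τ, x_τ⟩/κ, −f_τ), for every t there exists α_t ≥ 0 with π_{C_X}(u_{t−1}^x) = α_t·(κ, x_t); and with u_0^y = 0 and u_t^y = ∑_{τ=1}^t ω_τ (−⟨g_τ, y_τ⟩/κ, g_τ), for every t there exists α'_t ≥ 0 with π_{C_Y}(u_{t−1}^y) = α'_t·(κ, y_t). Set (x̄_T, ȳ_T)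 = ∑_{t=1}^T ω_t (x_t, y_t) / ∑_{t=1}^T ω_t. Then sup_{y∈Y} F(x̄_T, y) − inf_{x∈X} F(x, ȳ_T) ≤ c · κ L √(p+1) / √T. -/

import Mathlib

set_option autoImplicit false

open scoped RealInnerProductSpace
open Finset

noncomputable section

/-- The lifted vector `(t, y) ∈ ℝ × ℝⁿ = ℝ^{n+1}`. -/
def pr {n : ℕ} (t : ℝ) (y : EuclideanSpace ℝ (Fin n)) :
    EuclideanSpace ℝ (Fin (n + 1)) :=
  WithLp.toLp 2 (Fin.cons t (fun i => y i) : Fin (n + 1) → ℝ)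

/-- The conic hull `cone({κ} × X) = {α • (κ, x) : α ≥ 0, x ∈ X}`. -/
def coneLift {n : ℕ} (κ : ℝ) (X : Set (EuclideanSpace ℝ (Fin n))) :
    Set (EuclideanSpace ℝ (Fin (n + 1))) :=
  {u | ∃ α : ℝ, 0 ≤ α ∧ ∃ x ∈ X, u = α • pr κ x}

/-- `p` is the Euclidean orthogonal projection of `u` onto the set `S`. -/
def IsProjOn {E : Type*} [NormedAddCommGroup E] [InnerProductSpace ℝ E]
    (u : E) (S : Set E) (p : E) : Prop :=
  p ∈ S ∧ ∀ z ∈ S, dist u p ≤ dist u z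

lemma pr_zero_coord {n : ℕ} (t : ℝ) (y : EuclideanSpace ℝ (Fin n)) : pr t y 0 = t := rfl
lemma pr_succ_coord {n : ℕ} (t : ℝ) (y : EuclideanSpace ℝ (Fin n)) (i : Fin n) :
    pr t y i.succ = y i := rfl

lemma smul_pr {n : ℕ} (α t : ℝ) (y : EuclideanSpace ℝ (Fin n)) :
    α • pr t y = pr (α * t) (α • y) := by
  ext i
  refine Fin.cases ?_ (fun j => ?_) i
  · simp [pr]
  · simp [pr]

lemma pr_add {n : ℕ} (a b : ℝ) (u v : EuclideanSpace ℝ (Fin n)) :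
    pr a u + pr b v = pr (a + b) (u + v) := by
  ext i
  refine Fin.cases ?_ (fun j => ?_) i
  · simp [pr]
  · simp [pr]

lemma inner_pr_pr {n : ℕ} (a b : ℝ) (u v : EuclideanSpace ℝ (Fin n)) :
    ⟪pr a u, pr b v⟫ = a * b + ⟪u, v⟫ := by
  simp only [PiLp.inner_apply, RCLike.inner_apply, conj_trivial]
  rw [Fin.sum_univ_succ]
  simp [pr, mul_comm]

lemma norm_pr_sq {n : ℕ} (a : ℝ) (u : EuclideanSpace ℝ (Fin n)) :
    ‖pr a u‖ ^ 2 = a ^ 2 + ‖u‖ ^ 2 := by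
  rw [← real_inner_self_eq_norm_sq, ← real_inner_self_eq_norm_sq, inner_pr_pr, sq]

lemma mem_coneLift {n : ℕ} {κ : ℝ} {X : Set (EuclideanSpace ℝ (Fin n))}
    {x : EuclideanSpace ℝ (Fin n)} (hx : x ∈ X) : pr κ x ∈ coneLift κ X :=
  ⟨1, zero_le_one, x, hx, (one_smul _ _).symm⟩

lemma zero_mem_coneLift {n : ℕ} {κ : ℝ} {X : Set (EuclideanSpace ℝ (Fin n))}
    (hX : X.Nonempty) : (0 : EuclideanSpace ℝ (Fin (n+1))) ∈ coneLift κ X := by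
  obtain ⟨x, hx⟩ := hX
  exact ⟨0, le_refl 0, x, hx, (zero_smul ℝ _).symm⟩

lemma smul_mem_coneLift {n : ℕ} {κ : ℝ} {X : Set (EuclideanSpace ℝ (Fin n))}
    {c : ℝ} (hc : 0 ≤ c) {u : EuclideanSpace ℝ (Fin (n+1))} (hu : u ∈ coneLift κ X) :
    c • u ∈ coneLift κ X := by
  obtain ⟨α, hα, x, hx, rfl⟩ := hu
  exact ⟨c * α, mul_nonneg hc hα, x, hx, smul_smul c α _⟩

lemma coneLift_convex {n : ℕ} {κ : ℝ} {X : Set (EuclideanSpace ℝ (Fin n))}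
    (hX : Convex ℝ X) : Convex ℝ (coneLift κ X) := by
  rintro u ⟨α, hα, x, hx, rfl⟩ v ⟨β, hβ, x', hx', rfl⟩ a b ha hb hab
  rcases eq_or_lt_of_le (by positivity : (0:ℝ) ≤ a * α + b * β) with h | h
  · have h1 : a * α = 0 := by nlinarith [mul_nonneg ha hα, mul_nonneg hb hβ]
    have h2 : b * β = 0 := by nlinarith [mul_nonneg ha hα, mul_nonneg hb hβ]
    refine ⟨0, le_refl 0, x, hx, ?_⟩
    rw [smul_smul, smul_smul, h1, h2, zero_smul, zero_smul]; simp
  · set γ := a * α + b * β with hγ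
    refine ⟨γ, h.le, (a * α / γ) • x + (b * β / γ) • x', hX hx hx'
      (by positivity) (by positivity) (by field_simp; exact hγ.symm), ?_⟩
    rw [smul_smul, smul_smul, smul_pr, smul_pr, smul_pr, pr_add]
    have e1 : a * α * κ + b * β * κ = γ * κ := by ring
    have e2 : (a * α) • x + (b * β) • x'
        = γ • ((a * α / γ) • x + (b * β / γ) • x') := by
      rw [smul_add, smul_smul, smul_smul]
      congr 2 <;> field_simp
    rw [e1, e2]

-- variational inequality for projections onto convex sets
lemma isProjOn_inner_le {E : Type*} [NormedAddCommGroup E] [InnerProductSpace ℝ E]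
    {u q : E} {S : Set E} (hS : Convex ℝ S) (h : IsProjOn u S q) :
    ∀ z ∈ S, ⟪u - q, z - q⟫ ≤ 0 := by
  obtain ⟨hq, hmin⟩ := h
  rw [← norm_eq_iInf_iff_real_inner_le_zero hS hq]
  have : Nonempty S := ⟨⟨q, hq⟩⟩
  refine le_antisymm ?_ (ciInf_le (f := fun w : S => ‖u - (w:E)‖) ⟨0, fun _ ⟨w, hw⟩ => hw ▸ norm_nonneg _⟩ ⟨q, hq⟩)
  refine le_ciInf fun ⟨z, hz⟩ => ?_
  simpa [dist_eq_norm] using hmin z hz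

-- for projection onto a cone: ⟪u - q, q⟫ = 0 and ⟪u - q, z⟫ ≤ 0 for all z ∈ C
lemma isProjOn_cone {n : ℕ} {κ : ℝ} {X : Set (EuclideanSpace ℝ (Fin n))}
    (hXne : X.Nonempty) (hX : Convex ℝ X)
    {u q : EuclideanSpace ℝ (Fin (n+1))} (h : IsProjOn u (coneLift κ X) q) :
    ⟪u - q, q⟫ = 0 ∧ ∀ z ∈ coneLift κ X, ⟪u - q, z⟫ ≤ 0 := by
  have hvar := isProjOn_inner_le (coneLift_convex hX) h
  have hq := h.1
  have h2 : ⟪u - q, q⟫ ≤ 0 := by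
    have := hvar ((2:ℝ) • q) (smul_mem_coneLift (by norm_num) hq)
    have e : (2:ℝ) • q - q = q := by rw [two_smul]; abel
    rwa [e] at this
  have h0 : 0 ≤ ⟪u - q, q⟫ := by
    have := hvar 0 (zero_mem_coneLift hXne)
    rw [zero_sub, inner_neg_right] at this
    linarith
  have heq : ⟪u - q, q⟫ = 0 := le_antisymm h2 h0
  refine ⟨heq, fun z hz => ?_⟩
  have := hvar z hz
  rw [inner_sub_right, heq] at this
  linarith

lemma cba_bound {n : ℕ} {κ : ℝ} {X : Set (EuclideanSpace ℝ (Fin n))}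
    (hXne : X.Nonempty) (hX : Convex ℝ X)
    (T : ℕ) (hT : 1 ≤ T) (ω : ℕ → ℝ)
    (M : ℕ → EuclideanSpace ℝ (Fin (n+1)))
    (hproj : ∀ t ∈ Icc 1 T, ∃ q, IsProjOn (∑ τ ∈ Icc 1 (t-1), ω τ • M τ)
      (coneLift κ X) q ∧ ⟪M t, q⟫ = 0) :
    ∀ z ∈ coneLift κ X, ⟪∑ t ∈ Icc 1 T, ω t • M t, z⟫ ≤
      ‖z‖ * Real.sqrt (∑ t ∈ Icc 1 T, ω t ^ 2 * ‖M t‖ ^ 2) := by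
  classical
  set C := coneLift κ X with hC
  set u : ℕ → EuclideanSpace ℝ (Fin (n+1)) := fun t => ∑ τ ∈ Icc 1 t, ω τ • M τ with hu
  set B : ℕ → ℝ := fun t => ∑ τ ∈ Icc 1 t, ω τ ^ 2 * ‖M τ‖ ^ 2 with hB
  have hBnn : ∀ t, 0 ≤ B t := fun t =>
    Finset.sum_nonneg fun τ _ => mul_nonneg (sq_nonneg _) (sq_nonneg _)
  set Q : ℕ → EuclideanSpace ℝ (Fin (n+1)) := fun t =>
    if h : t ∈ Icc 1 T then (hproj t h).choose else 0 with hQdef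
  have hQ : ∀ t ∈ Icc 1 T, IsProjOn (u (t-1)) C (Q t) ∧ ⟪M t, Q t⟫ = 0 := by
    intro t ht
    simp only [hQdef, dif_pos ht]
    exact (hproj t ht).choose_spec
  -- recursion for sums
  have hsum : ∀ t : ℕ, 1 ≤ t → u t = u (t-1) + ω t • M t := by
    intro t ht
    obtain ⟨s, rfl⟩ := Nat.exists_eq_add_of_le ht
    simp only [hu, Nat.add_sub_cancel' ?_]
    rw [show 1 + s = s + 1 by ring, Nat.add_sub_cancel]
    exact Finset.sum_Icc_succ_top (Nat.le_add_left 1 s) _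
  have hBsum : ∀ t : ℕ, 1 ≤ t → B t = B (t-1) + ω t ^ 2 * ‖M t‖ ^ 2 := by
    intro t ht
    obtain ⟨s, rfl⟩ := Nat.exists_eq_add_of_le ht
    simp only [hB]
    rw [show 1 + s = s + 1 by ring, Nat.add_sub_cancel]
    exact Finset.sum_Icc_succ_top (Nat.le_add_left 1 s) _
  -- norm of smul
  have hns : ∀ t, ‖ω t • M t‖ ^ 2 = ω t ^ 2 * ‖M t‖ ^ 2 := by
    intro t
    rw [norm_smul, mul_pow, Real.norm_eq_abs, sq_abs]
  -- pythagoras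
  have hpyth : ∀ t ∈ Icc 1 T, ‖Q t + ω t • M t‖ ^ 2 = ‖Q t‖ ^ 2 + ω t ^ 2 * ‖M t‖ ^ 2 := by
    intro t ht
    have horth : ⟪Q t, ω t • M t⟫ = 0 := by
      rw [real_inner_smul_right, real_inner_comm, (hQ t ht).2, mul_zero]
    rw [norm_add_sq_real, horth, hns]
    ring
  -- main induction
  have hind : ∀ t : ℕ, 1 ≤ t → t ≤ T → ‖Q t‖ ^ 2 ≤ B (t - 1) := by
    intro t ht'
    induction t, ht' using Nat.le_induction with
    | base =>
      intro h1T
      have h1 : (1:ℕ) ∈ Icc 1 T := by simp [h1T]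
      have hp := (hQ 1 h1).1
      have hu0 : u 0 = 0 := by simp [hu]
      have : dist (u 0) (Q 1) ≤ dist (u 0) 0 := hp.2 0 (zero_mem_coneLift hXne)
      simp only [hu0, dist_zero_left, dist_self, norm_zero] at this
      have : ‖Q 1‖ = 0 := le_antisymm this (norm_nonneg _)
      simp [this, hB]
    | succ t ht IH =>
      intro htT
      have htT' : t ≤ T := le_trans (Nat.le_succ t) htT
      have hIH := IH htT'
      have ht1 : t + 1 ∈ Icc 1 T := by simp [htT]
      have htm : t ∈ Icc 1 T := by simp [ht, htT']
      have hq1 := (hQ (t+1) ht1).1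
      rw [Nat.add_sub_cancel] at hq1
      obtain ⟨horth, hle⟩ := isProjOn_cone hXne hX hq1
      set q := Q (t+1)
      set v := Q t + ω t • M t with hv
      -- ‖q‖² = ⟪u t, q⟫
      have e1 : ‖q‖ ^ 2 = ⟪u t, q⟫ := by
        have : ⟪u t, q⟫ = ⟪u t - q, q⟫ + ⟪q, q⟫ := by
          rw [← inner_add_left]; congr 1; abel
        rw [this, horth, zero_add, real_inner_self_eq_norm_sq]
      have e2 : ⟪u t, q⟫ = ⟪u (t-1) - Q t, q⟫ + ⟪v, q⟫ := by
        rw [← inner_add_left, hsum t ht, hv]; congr 1; abel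
      have e3 : ⟪u (t-1) - Q t, q⟫ ≤ 0 :=
        ((isProjOn_cone hXne hX (hQ t htm).1).2) q hq1.1
      have e4 : ⟪v, q⟫ ≤ ‖v‖ * ‖q‖ := real_inner_le_norm v q
      have e5 : ‖v‖ ^ 2 ≤ B t := by
        rw [hpyth t htm, hBsum t ht]
        linarith
      have e6 : ‖q‖ ^ 2 ≤ ‖v‖ * ‖q‖ := by
        rw [e1, e2]; linarith
      rw [Nat.add_sub_cancel]
      nlinarith [sq_nonneg (‖q‖ - ‖v‖), norm_nonneg q, norm_nonneg v]
  -- conclusion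
  intro z hz
  have hTmem : T ∈ Icc 1 T := by simp [hT]
  obtain ⟨horth, hle⟩ := isProjOn_cone hXne hX (hQ T hTmem).1
  set v := Q T + ω T • M T with hv
  have e2 : ⟪u T, z⟫ = ⟪u (T-1) - Q T, z⟫ + ⟪v, z⟫ := by
    rw [← inner_add_left, hsum T hT, hv]; congr 1; abel
  have e3 : ⟪u (T-1) - Q T, z⟫ ≤ 0 := hle z hz
  have e4 : ⟪v, z⟫ ≤ ‖v‖ * ‖z‖ := real_inner_le_norm v z
  have e5 : ‖v‖ ^ 2 ≤ B T := by
    rw [hpyth T hTmem, hBsum T hT]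
    have := hind T hT le_rfl
    linarith
  have e6 : ‖v‖ ≤ Real.sqrt (B T) := by
    rw [← Real.sqrt_sq (norm_nonneg v)]
    exact Real.sqrt_le_sqrt e5
  calc ⟪u T, z⟫ ≤ ‖v‖ * ‖z‖ := by linarith
    _ ≤ Real.sqrt (B T) * ‖z‖ := by
        apply mul_le_mul_of_nonneg_right e6 (norm_nonneg z)
    _ = ‖z‖ * Real.sqrt (B T) := mul_comm _ _

lemma bern_key (p : ℕ) : ∀ s : ℝ, 1 ≤ s → s^(p+1) - ((p:ℝ)+1)*s^p ≤ (s-1)^(p+1) := by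
  intro s hs
  have hs0 : 0 < s := lt_of_lt_of_le one_pos hs
  have h1 : 1 + ((p+1 : ℕ):ℝ) * (-1/s) ≤ (1 + (-1/s))^(p+1) := by
    apply one_add_mul_le_pow
    rw [neg_div]
    have : 1/s ≤ 1 := by rw [div_le_one hs0]; exact hs
    linarith
  have h2 : (1 + (-1/s)) = (s-1)/s := by field_simp; ring
  rw [h2, div_pow] at h1
  have h3 : s^(p+1) * (1 + ((p+1:ℕ):ℝ) * (-1/s)) ≤ s^(p+1) * ((s-1)^(p+1) / s^(p+1)) :=
    mul_le_mul_of_nonneg_left h1 (by positivity)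
  have h4 : s^(p+1) * ((s-1)^(p+1)/s^(p+1)) = (s-1)^(p+1) := by
    field_simp
  have h5 : s^(p+1) * (1 + ((p+1:ℕ):ℝ) * (-1/s)) = s^(p+1) - ((p:ℝ)+1)*s^p := by
    have hss : s^(p+1) = s^p * s := pow_succ s p
    push_cast
    field_simp
    ring
  rw [h4, h5] at h3
  exact h3

lemma sum_pow_lb (p T : ℕ) :
    (T:ℝ)^(p+1) ≤ ((p:ℝ)+1) * ∑ t ∈ Icc 1 T, (t:ℝ)^p := by
  induction T with
  | zero => simp
  | succ T IH =>
    rw [Finset.sum_Icc_succ_top (by omega : 1 ≤ T + 1)]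
    have hkey := bern_key p ((T:ℝ)+1) (by linarith [Nat.cast_nonneg (α := ℝ) T])
    have hc : ((T:ℝ)+1) - 1 = (T:ℝ) := by ring
    rw [hc] at hkey
    push_cast
    nlinarith [IH]

lemma sum_pow_ub (p T : ℕ) :
    ∑ t ∈ Icc 1 T, (t:ℝ)^(2*p) ≤ (T:ℝ)^p * ∑ t ∈ Icc 1 T, (t:ℝ)^p := by
  rw [mul_sum]
  apply sum_le_sum
  intro t ht
  have h1 : (t:ℝ) ≤ (T:ℝ) := by
    exact_mod_cast (Finset.mem_Icc.mp ht).2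
  have h0 : (0:ℝ) ≤ (t:ℝ) := Nat.cast_nonneg t
  calc (t:ℝ)^(2*p) = (t:ℝ)^p * (t:ℝ)^p := by rw [← pow_add]; ring_nf
    _ ≤ (T:ℝ)^p * (t:ℝ)^p := by
        apply mul_le_mul_of_nonneg_right (pow_le_pow_left₀ h0 h1 p) (by positivity)

lemma regret_bound {n : ℕ} {κ L : ℝ} (hκ : 0 < κ) (hL : 0 ≤ L)
    {X : Set (EuclideanSpace ℝ (Fin n))} (hXne : X.Nonempty) (hXconv : Convex ℝ X)
    (hbound : ∀ x ∈ X, ‖x‖ ≤ κ) (p T : ℕ) (hT : 1 ≤ T)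
    (x f : ℕ → EuclideanSpace ℝ (Fin n))
    (hx : ∀ t ∈ Icc 1 T, x t ∈ X) (hf : ∀ t ∈ Icc 1 T, ‖f t‖ ≤ L)
    (hproj : ∀ t ∈ Icc 1 T, ∃ α : ℝ, 0 ≤ α ∧
      IsProjOn (∑ τ ∈ Icc 1 (t - 1), ((τ : ℝ) ^ p) • pr (⟪f τ, x τ⟫ / κ) (-(f τ)))
        (coneLift κ X) (α • pr κ (x t))) :
    ∀ z ∈ X, ∑ t ∈ Icc 1 T, ((t:ℝ)^p) * ⟪f t, x t - z⟫ ≤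
      2 * κ * L * Real.sqrt (∑ t ∈ Icc 1 T, (t:ℝ)^(2*p)) := by
  intro z hz
  have hκ' : κ ≠ 0 := ne_of_gt hκ
  set ω : ℕ → ℝ := fun t => (t:ℝ)^p with hω
  set M : ℕ → EuclideanSpace ℝ (Fin (n+1)) :=
    fun t => pr (⟪f t, x t⟫ / κ) (-(f t)) with hM
  have horth : ∀ t, ⟪M t, pr κ (x t)⟫ = 0 := by
    intro t
    simp only [hM]
    rw [inner_pr_pr, inner_neg_left, div_mul_cancel₀ _ hκ']
    ring
  have hproj' : ∀ t ∈ Icc 1 T, ∃ q, IsProjOn (∑ τ ∈ Icc 1 (t-1), ω τ • M τ)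
      (coneLift κ X) q ∧ ⟪M t, q⟫ = 0 := by
    intro t ht
    obtain ⟨α, hα, hP⟩ := hproj t ht
    exact ⟨_, hP, by rw [real_inner_smul_right, horth, mul_zero]⟩
  have key := cba_bound hXne hXconv T hT ω M hproj' (pr κ z) (mem_coneLift hz)
  have hLHS : ⟪∑ t ∈ Icc 1 T, ω t • M t, pr κ z⟫
      = ∑ t ∈ Icc 1 T, ω t * ⟪f t, x t - z⟫ := by
    rw [sum_inner]
    apply sum_congr rfl
    intro t ht
    rw [real_inner_smul_left]
    congr 1
    simp only [hM]
    rw [inner_pr_pr, inner_neg_left, div_mul_cancel₀ _ hκ', inner_sub_right]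
    ring
  set S2 : ℝ := ∑ t ∈ Icc 1 T, (t:ℝ)^(2*p) with hS2
  have hS2nn : 0 ≤ S2 := sum_nonneg fun t _ => by positivity
  have hnormz : ‖pr κ z‖ ≤ Real.sqrt 2 * κ := by
    have h1 : ‖pr κ z‖^2 ≤ 2*κ^2 := by
      rw [norm_pr_sq]
      nlinarith [hbound z hz, norm_nonneg z]
    calc ‖pr κ z‖ = Real.sqrt (‖pr κ z‖^2) := (Real.sqrt_sq (norm_nonneg _)).symm
      _ ≤ Real.sqrt (2*κ^2) := Real.sqrt_le_sqrt h1
      _ = Real.sqrt 2 * κ := by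
          rw [Real.sqrt_mul (by norm_num), Real.sqrt_sq hκ.le]
  have hMn : ∀ t ∈ Icc 1 T, ‖M t‖^2 ≤ 2*L^2 := by
    intro t ht
    simp only [hM]
    rw [norm_pr_sq, norm_neg]
    have h1 : ‖f t‖ ≤ L := hf t ht
    have h2 : |⟪f t, x t⟫| ≤ L * κ := by
      calc |⟪f t, x t⟫| ≤ ‖f t‖ * ‖x t‖ := abs_real_inner_le_norm _ _
        _ ≤ L * κ := mul_le_mul h1 (hbound _ (hx t ht)) (norm_nonneg _) hL
    have h3 : (⟪f t, x t⟫/κ)^2 ≤ L^2 := by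
      rw [div_pow, div_le_iff₀ (by positivity)]
      nlinarith [sq_abs ⟪f t, x t⟫, abs_nonneg ⟪f t, x t⟫]
    nlinarith [norm_nonneg (f t)]
  have hB : ∑ t ∈ Icc 1 T, ω t^2 * ‖M t‖^2 ≤ 2*L^2 * S2 := by
    rw [hS2, mul_sum]
    apply sum_le_sum
    intro t ht
    have e : ω t^2 = (t:ℝ)^(2*p) := by
      simp only [hω]
      rw [← pow_mul]
      ring_nf
    calc ω t^2 * ‖M t‖^2 ≤ ω t^2 * (2*L^2) :=
          mul_le_mul_of_nonneg_left (hMn t ht) (sq_nonneg _)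
      _ = 2*L^2 * (t:ℝ)^(2*p) := by rw [e]; ring
  have hsqB : Real.sqrt (∑ t ∈ Icc 1 T, ω t^2 * ‖M t‖^2)
      ≤ Real.sqrt 2 * L * Real.sqrt S2 := by
    calc Real.sqrt (∑ t ∈ Icc 1 T, ω t^2 * ‖M t‖^2)
        ≤ Real.sqrt (2*L^2 * S2) := Real.sqrt_le_sqrt hB
      _ = Real.sqrt 2 * L * Real.sqrt S2 := by
          rw [Real.sqrt_mul (by positivity), Real.sqrt_mul (by norm_num : (0:ℝ) ≤ 2),
            Real.sqrt_sq hL]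
  calc ∑ t ∈ Icc 1 T, ((t:ℝ)^p) * ⟪f t, x t - z⟫
      = ⟪∑ t ∈ Icc 1 T, ω t • M t, pr κ z⟫ := hLHS.symm
    _ ≤ ‖pr κ z‖ * Real.sqrt (∑ t ∈ Icc 1 T, ω t^2 * ‖M t‖^2) := key
    _ ≤ (Real.sqrt 2 * κ) * (Real.sqrt 2 * L * Real.sqrt S2) := by
        apply mul_le_mul hnormz hsqB (Real.sqrt_nonneg _) (by positivity)
    _ = (Real.sqrt 2 * Real.sqrt 2) * κ * L * Real.sqrt S2 := by ring
    _ = 2 * κ * L * Real.sqrt S2 := by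
        rw [Real.mul_self_sqrt (by norm_num : (0:ℝ) ≤ 2)]

/-- Theorem 4, part 1: in the repeated game framework where both
players use CBA with polynomial weights `ω_t = t^p`, the weighted average
iterates have duality gap at most `c · κ L √(p+1) / √T` for a universal `c`. -/
theorem stmt9 :
    ∃ c : ℝ, 0 < c ∧
      ∀ (n m : ℕ)
        (X : Set (EuclideanSpace ℝ (Fin n))) (Y : Set (EuclideanSpace ℝ (Fin m))),
        X.Nonempty → Convex ℝ X → IsCompact X →
        Y.Nonempty → Convex ℝ Y → IsCompact Y →
        ∀ κ : ℝ, IsGreatest (((fun x => ‖x‖) '' X) ∪ ((fun y => ‖y‖) '' Y)) κ → 0 < κ →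
        ∀ F : EuclideanSpace ℝ (Fin n) → EuclideanSpace ℝ (Fin m) → ℝ,
        (∀ y ∈ Y, ConvexOn ℝ X (fun x => F x y)) →
        (∀ x ∈ X, ConcaveOn ℝ Y (fun y => F x y)) →
        ∀ (p : ℕ) (T : ℕ), 1 ≤ T →
        ∀ L : ℝ,
        ∀ (x : ℕ → EuclideanSpace ℝ (Fin n)) (y : ℕ → EuclideanSpace ℝ (Fin m))
          (f : ℕ → EuclideanSpace ℝ (Fin n)) (g : ℕ → EuclideanSpace ℝ (Fin m)),
        (∀ t ∈ Icc 1 T, x t ∈ X) → (∀ t ∈ Icc 1 T, y t ∈ Y) →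
        -- `f t` is a subgradient of `F(·, y t)` at `x t`, with `‖f t‖₂ ≤ L`
        (∀ t ∈ Icc 1 T,
          (∀ x' ∈ X, F (x t) (y t) + ⟪f t, x' - x t⟫ ≤ F x' (y t)) ∧ ‖f t‖ ≤ L) →
        -- `g t` is a supergradient of `F(x t, ·)` at `y t`, with `‖g t‖₂ ≤ L`
        (∀ t ∈ Icc 1 T,
          (∀ y' ∈ Y, F (x t) y' ≤ F (x t) (y t) + ⟪g t, y' - y t⟫) ∧ ‖g t‖ ≤ L) →
        -- CBA choice rule for the first player, with
        -- `u_t^x = ∑_{τ=1}^t τ^p • (⟨f_τ, x_τ⟩/κ, −f_τ)`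
        (∀ t ∈ Icc 1 T, ∃ α : ℝ, 0 ≤ α ∧
          IsProjOn (∑ τ ∈ Icc 1 (t - 1), ((τ : ℝ) ^ p) • pr (⟪f τ, x τ⟫ / κ) (-(f τ)))
            (coneLift κ X) (α • pr κ (x t))) →
        -- CBA choice rule for the second player, with
        -- `u_t^y = ∑_{τ=1}^t τ^p • (−⟨g_τ, y_τ⟩/κ, g_τ)`
        (∀ t ∈ Icc 1 T, ∃ α : ℝ, 0 ≤ α ∧
          IsProjOn (∑ τ ∈ Icc 1 (t - 1), ((τ : ℝ) ^ p) • pr (-⟪g τ, y τ⟫ / κ) (g τ))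
            (coneLift κ Y) (α • pr κ (y t))) →
        (⨆ yy : Y,
            F ((∑ t ∈ Icc 1 T, ((t : ℝ) ^ p))⁻¹ • ∑ t ∈ Icc 1 T, ((t : ℝ) ^ p) • x t) yy)
          - (⨅ xx : X,
              F xx ((∑ t ∈ Icc 1 T, ((t : ℝ) ^ p))⁻¹ • ∑ t ∈ Icc 1 T, ((t : ℝ) ^ p) • y t))
        ≤ c * κ * L * Real.sqrt ((p : ℝ) + 1) / Real.sqrt (T : ℝ) := by
  refine ⟨4, by norm_num, ?_⟩
  intro n m X Y hXne hXconv _ hYne hYconv _ κ hκgr hκpos F hFconv hFconc p T hT L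
    x y f g hxmem hymem hf hg hprojx hprojy
  have hXb : ∀ z ∈ X, ‖z‖ ≤ κ := fun z hz => hκgr.2 (Or.inl ⟨z, hz, rfl⟩)
  have hYb : ∀ z ∈ Y, ‖z‖ ≤ κ := fun z hz => hκgr.2 (Or.inr ⟨z, hz, rfl⟩)
  have h1T : (1:ℕ) ∈ Icc 1 T := by simp [hT]
  have hL0 : (0:ℝ) ≤ L := le_trans (norm_nonneg (f 1)) (hf 1 h1T).2
  have hTpos : (0:ℝ) < (T:ℝ) := by exact_mod_cast hT
  set Ω : ℝ := ∑ t ∈ Icc 1 T, ((t:ℝ)^p) with hΩ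
  have hΩpos : 0 < Ω := by
    apply Finset.sum_pos
    · intro t ht
      have h1 : 1 ≤ t := (Finset.mem_Icc.mp ht).1
      have : (0:ℝ) < (t:ℝ) := by exact_mod_cast h1
      positivity
    · exact ⟨1, h1T⟩
  set S2 : ℝ := ∑ t ∈ Icc 1 T, (t:ℝ)^(2*p) with hS2
  set R : ℝ := 2 * κ * L * Real.sqrt S2 with hR
  -- regret bounds
  have Rx : ∀ z ∈ X, ∑ t ∈ Icc 1 T, ((t:ℝ)^p) * ⟪f t, x t - z⟫ ≤ R :=
    regret_bound hκpos hL0 hXne hXconv hXb p T hT x f hxmem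
      (fun t ht => (hf t ht).2) hprojx
  have Ry : ∀ z ∈ Y, ∑ t ∈ Icc 1 T, ((t:ℝ)^p) * ⟪g t, z - y t⟫ ≤ R := by
    have hinner : ∀ (τ : ℕ), pr (⟪-(g τ), y τ⟫ / κ) (-(-(g τ))) = pr (-⟪g τ, y τ⟫ / κ) (g τ) := by
      intro τ
      rw [inner_neg_left, neg_neg]
    have hRy := regret_bound hκpos hL0 hYne hYconv hYb p T hT y (fun t => -(g t)) hymem
      (fun t ht => by rw [norm_neg]; exact (hg t ht).2)
      (by
        intro t ht
        obtain ⟨α, hα, hP⟩ := hprojy t ht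
        refine ⟨α, hα, ?_⟩
        convert hP using 3
        exact hinner _)
    intro z hz
    have := hRy z hz
    calc ∑ t ∈ Icc 1 T, ((t:ℝ)^p) * ⟪g t, z - y t⟫
        = ∑ t ∈ Icc 1 T, ((t:ℝ)^p) * ⟪-(g t), y t - z⟫ := by
          apply Finset.sum_congr rfl
          intro t _
          rw [inner_neg_left, ← inner_neg_right, neg_sub]
      _ ≤ R := this
  -- weights
  set w : ℕ → ℝ := fun t => Ω⁻¹ * ((t:ℝ)^p) with hw
  have hw0 : ∀ t ∈ Icc 1 T, 0 ≤ w t := by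
    intro t _
    simp only [hw]
    positivity
  have hw1 : ∑ t ∈ Icc 1 T, w t = 1 := by
    simp only [hw]
    rw [← Finset.mul_sum, ← hΩ, inv_mul_cancel₀ hΩpos.ne']
  set xbar := Ω⁻¹ • ∑ t ∈ Icc 1 T, ((t:ℝ)^p) • x t with hxbar
  set ybar := Ω⁻¹ • ∑ t ∈ Icc 1 T, ((t:ℝ)^p) • y t with hybar
  have hxbar_eq : xbar = ∑ t ∈ Icc 1 T, w t • x t := by
    rw [hxbar, Finset.smul_sum]
    exact Finset.sum_congr rfl fun t _ => (smul_smul _ _ _)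
  have hybar_eq : ybar = ∑ t ∈ Icc 1 T, w t • y t := by
    rw [hybar, Finset.smul_sum]
    exact Finset.sum_congr rfl fun t _ => (smul_smul _ _ _)
  -- the key gap bound
  have hgap : ∀ xx ∈ X, ∀ yy ∈ Y, F xbar yy - F xx ybar ≤ Ω⁻¹ * (2 * R) := by
    intro xx hxx yy hyy
    have hA : F xbar yy ≤ ∑ t ∈ Icc 1 T, w t * F (x t) yy := by
      rw [hxbar_eq]
      exact (hFconv yy hyy).map_sum_le hw0 hw1 hxmem
    have hA2 : ∑ t ∈ Icc 1 T, w t * F (x t) yy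
        ≤ ∑ t ∈ Icc 1 T, w t * (F (x t) (y t) + ⟪g t, yy - y t⟫) := by
      apply Finset.sum_le_sum
      intro t ht
      exact mul_le_mul_of_nonneg_left ((hg t ht).1 yy hyy) (hw0 t ht)
    have hB : ∑ t ∈ Icc 1 T, w t * F xx (y t) ≤ F xx ybar := by
      rw [hybar_eq]
      exact (hFconc xx hxx).le_map_sum hw0 hw1 hymem
    have hB2 : ∑ t ∈ Icc 1 T, w t * (F (x t) (y t) + ⟪f t, xx - x t⟫)
        ≤ ∑ t ∈ Icc 1 T, w t * F xx (y t) := by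
      apply Finset.sum_le_sum
      intro t ht
      exact mul_le_mul_of_nonneg_left ((hf t ht).1 xx hxx) (hw0 t ht)
    have hsplit : ∑ t ∈ Icc 1 T, w t * (F (x t) (y t) + ⟪g t, yy - y t⟫)
        - ∑ t ∈ Icc 1 T, w t * (F (x t) (y t) + ⟪f t, xx - x t⟫)
        = Ω⁻¹ * ((∑ t ∈ Icc 1 T, ((t:ℝ)^p) * ⟪g t, yy - y t⟫)
            + ∑ t ∈ Icc 1 T, ((t:ℝ)^p) * ⟪f t, x t - xx⟫) := by
      rw [← Finset.sum_sub_distrib, ← Finset.sum_add_distrib, Finset.mul_sum]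
      apply Finset.sum_congr rfl
      intro t _
      have hfi : ⟪f t, xx - x t⟫ = -⟪f t, x t - xx⟫ := by
        rw [← inner_neg_right, neg_sub]
      simp only [hw]
      rw [hfi]
      ring
    have hC := Ry yy hyy
    have hD := Rx xx hxx
    have hmul : Ω⁻¹ * ((∑ t ∈ Icc 1 T, ((t:ℝ)^p) * ⟪g t, yy - y t⟫)
          + ∑ t ∈ Icc 1 T, ((t:ℝ)^p) * ⟪f t, x t - xx⟫) ≤ Ω⁻¹ * (2 * R) := by
      apply mul_le_mul_of_nonneg_left _ (inv_nonneg.mpr hΩpos.le)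
      linarith
    linarith
  -- arithmetic: Ω⁻¹ * (2R) ≤ 4κL√(p+1)/√T
  have harith : Ω⁻¹ * (2 * R) ≤ 4 * κ * L * Real.sqrt ((p:ℝ)+1) / Real.sqrt (T:ℝ) := by
    have hub := sum_pow_ub p T
    have hlb := sum_pow_lb p T
    rw [← hΩ] at hub hlb
    rw [← hS2] at hub
    have hTp : (0:ℝ) ≤ (T:ℝ)^p := by positivity
    have hS2T : S2 * (T:ℝ) ≤ ((p:ℝ)+1) * Ω^2 := by
      have h1 : S2 * (T:ℝ) ≤ ((T:ℝ)^p * Ω) * (T:ℝ) :=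
        mul_le_mul_of_nonneg_right hub hTpos.le
      have h2 : ((T:ℝ)^p * Ω) * (T:ℝ) = (T:ℝ)^(p+1) * Ω := by
        rw [pow_succ]; ring
      have h3 : (T:ℝ)^(p+1) * Ω ≤ (((p:ℝ)+1) * Ω) * Ω :=
        mul_le_mul_of_nonneg_right hlb hΩpos.le
      nlinarith
    have hS2le : S2 ≤ Ω^2 * (((p:ℝ)+1) / (T:ℝ)) := by
      rw [mul_div_assoc']
      rw [le_div_iff₀ hTpos]
      nlinarith
    have hsq : Real.sqrt S2 ≤ Ω * (Real.sqrt ((p:ℝ)+1) / Real.sqrt (T:ℝ)) := by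
      calc Real.sqrt S2 ≤ Real.sqrt (Ω^2 * (((p:ℝ)+1) / (T:ℝ))) := Real.sqrt_le_sqrt hS2le
        _ = Ω * (Real.sqrt ((p:ℝ)+1) / Real.sqrt (T:ℝ)) := by
            rw [Real.sqrt_mul (sq_nonneg Ω), Real.sqrt_sq hΩpos.le,
              Real.sqrt_div (by positivity : (0:ℝ) ≤ (p:ℝ)+1)]
    have hfinal : Ω⁻¹ * (2 * R) = Ω⁻¹ * (4 * κ * L * Real.sqrt S2) := by
      rw [hR]; ring
    rw [hfinal]
    have h5 : 4 * κ * L * Real.sqrt S2 ≤ 4 * κ * L *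
        (Ω * (Real.sqrt ((p:ℝ)+1) / Real.sqrt (T:ℝ))) := by
      apply mul_le_mul_of_nonneg_left hsq (by positivity)
    calc Ω⁻¹ * (4 * κ * L * Real.sqrt S2)
        ≤ Ω⁻¹ * (4 * κ * L * (Ω * (Real.sqrt ((p:ℝ)+1) / Real.sqrt (T:ℝ)))) :=
          mul_le_mul_of_nonneg_left h5 (inv_nonneg.mpr hΩpos.le)
      _ = 4 * κ * L * Real.sqrt ((p:ℝ)+1) / Real.sqrt (T:ℝ) := by
          field_simp
  -- conclusion via csSup/csInf
  have hne_Y : Nonempty Y := hYne.to_subtype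
  have hne_X : Nonempty X := hXne.to_subtype
  rw [sub_le_iff_le_add]
  apply ciSup_le
  intro yy
  rw [← sub_le_iff_le_add']
  apply le_ciInf
  intro xx
  have h := hgap xx xx.2 yy yy.2
  linarith

end
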